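/- For every real x > 0 and all positive integers f and h, P(χ²_{f+2h} ≤ x) − P(χ²_f ≤ x) = − ∑_{k=1}^{h} (x/2)^{f/2 + h − k} · e^{−x/2} / Γ(f/2 + h − k + 1), where Γ is the real gamma function. -/

import Mathlib

open MeasureTheory ProbabilityTheory Set

noncomputable section

/-- Chi-squared distribution with `f` degrees of freedom:
the Gamma distribution with shape `f/2` and rate `1/2`. -/
def chiSq (f : ℕ) : Measure ℝ := gammaMeasure ((f : ℝ) / 2) (1 / 2)

namespace ChiSqAux

open Real intervalIntegral

/-- The integrand of the gamma CDF with rate 1/2. -/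
def p (a t : ℝ) : ℝ := (1/2 : ℝ) ^ a / Real.Gamma a * t ^ (a - 1) * Real.exp (-(1/2 * t))

lemma p_def (a t : ℝ) :
    p a t = (1/2 : ℝ) ^ a / Real.Gamma a * t ^ (a - 1) * Real.exp (-(1/2 * t)) := rfl

lemma p_intervalIntegrable {a : ℝ} (ha : 0 < a) {x : ℝ} (hx : 0 < x) :
    IntervalIntegrable (p a) volume 0 x := by
  have h1 : IntervalIntegrable (fun t : ℝ => t ^ (a - 1)) volume 0 x :=
    intervalIntegral.intervalIntegrable_rpow' (by linarith)
  rw [intervalIntegrable_iff_integrableOn_Ioc_of_le hx.le] at h1 ⊢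
  refine Integrable.mono' ((h1.const_mul |(1/2 : ℝ) ^ a / Real.Gamma a|)) ?_ ?_
  · apply Measurable.aestronglyMeasurable
    exact ((measurable_const.mul (measurable_id.pow_const _)).mul
      ((measurable_const.mul measurable_id).neg.exp))
  · rw [ae_restrict_iff' measurableSet_Ioc]
    filter_upwards with t ht
    have ht0 : 0 < t := ht.1
    have hexp : Real.exp (-(1/2 * t)) ≤ 1 := by
      rw [Real.exp_le_one_iff]; linarith
    have hpow : (0:ℝ) ≤ t ^ (a - 1) := Real.rpow_nonneg ht0.le _
    simp only [p_def, Real.norm_eq_abs, abs_mul, abs_of_nonneg hpow,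
      abs_of_nonneg (Real.exp_pos _).le]
    calc |(1/2 : ℝ) ^ a / Real.Gamma a| * t ^ (a - 1) * Real.exp (-(1/2 * t))
        ≤ |(1/2 : ℝ) ^ a / Real.Gamma a| * t ^ (a - 1) * 1 := by
          apply mul_le_mul_of_nonneg_left hexp (by positivity)
      _ = |(1/2 : ℝ) ^ a / Real.Gamma a| * t ^ (a - 1) := by ring

/-- The gamma CDF with rate `1/2` as an interval integral. -/
lemma gamma_cdf_eq {a : ℝ} (ha : 0 < a) {x : ℝ} (hx : 0 < x) :
    ((gammaMeasure a (1/2) : Measure ℝ) (Iic x)).toReal = ∫ t in (0:ℝ)..x, p a t := by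
  haveI := isProbabilityMeasure_gammaMeasure ha (by norm_num : (0:ℝ) < 1/2)
  have h := cdf_gammaMeasure_eq_integral ha (by norm_num : (0:ℝ) < 1/2) x
  rw [cdf_eq_real, measureReal_def] at h
  rw [h]
  have hne : ∀ᵐ t : ℝ, t ≠ 0 := by
    rw [ae_iff]
    have : {t : ℝ | ¬ t ≠ 0} = {0} := by ext t; simp
    rw [this]; exact Real.volume_singleton
  have hsplit : Iic x = Iic 0 ∪ Ioc 0 x := (Iic_union_Ioc_eq_Iic hx.le).symm
  have hz : gammaPDFReal a (1/2) =ᶠ[ae (volume.restrict (Iic 0))] (fun _ => 0) := by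
    rw [Filter.EventuallyEq, ae_restrict_iff' measurableSet_Iic]
    filter_upwards [hne] with t ht0 htle
    have : t < 0 := lt_of_le_of_ne htle ht0
    simp [gammaPDFReal, not_le.mpr this]
  have hleft : ∫ t in Iic 0, gammaPDFReal a (1/2) t = 0 := by
    rw [integral_congr_ae hz]; simp
  have hleftInt : IntegrableOn (gammaPDFReal a (1/2)) (Iic 0) volume :=
    (integrable_zero _ _ _).congr hz.symm
  have hrightInt : IntegrableOn (gammaPDFReal a (1/2)) (Ioc 0 x) volume := by
    have := (p_intervalIntegrable ha hx)
    rw [intervalIntegrable_iff_integrableOn_Ioc_of_le hx.le] at this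
    apply this.congr_fun ?_ measurableSet_Ioc
    intro t ht
    simp [gammaPDFReal, ht.1.le, p_def]
  rw [hsplit, setIntegral_union (Set.Iic_disjoint_Ioc le_rfl) measurableSet_Ioc hleftInt
    hrightInt, hleft, zero_add, intervalIntegral.integral_of_le hx.le]
  apply setIntegral_congr_fun measurableSet_Ioc
  intro t ht
  simp [gammaPDFReal, ht.1.le, p]

/-- One step of the recurrence. -/
lemma step {a : ℝ} (ha : 0 < a) {x : ℝ} (hx : 0 < x) :
    ((gammaMeasure (a+1) (1/2) : Measure ℝ) (Iic x)).toReal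
      - ((gammaMeasure a (1/2) : Measure ℝ) (Iic x)).toReal
      = -((x/2) ^ a * Real.exp (-x/2) / Real.Gamma (a+1)) := by
  have hG : Real.Gamma a ≠ 0 := (Real.Gamma_pos_of_pos ha).ne'
  have hG1 : Real.Gamma (a+1) ≠ 0 := (Real.Gamma_pos_of_pos (by linarith)).ne'
  have hGrec : Real.Gamma (a+1) = a * Real.Gamma a := Real.Gamma_add_one ha.ne'
  set F : ℝ → ℝ := fun t => -((1/2 : ℝ) ^ a / Real.Gamma (a+1) * t ^ a * Real.exp (-(1/2 * t)))
    with hF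
  have hcont : ContinuousOn F (Set.Icc 0 x) := by
    apply Continuous.continuousOn
    apply Continuous.neg
    apply Continuous.mul
    · exact (continuous_const.mul (Real.continuous_rpow_const ha.le))
    · exact ((continuous_const.mul continuous_id).neg.rexp)
  have hderiv : ∀ t ∈ Set.Ioo 0 x, HasDerivAt F (p (a+1) t - p a t) t := by
    intro t ht
    have ht0 : 0 < t := ht.1
    have h1 : HasDerivAt (fun s : ℝ => s ^ a) (a * t ^ (a-1)) t :=
      Real.hasDerivAt_rpow_const (Or.inl ht0.ne')
    have h2 : HasDerivAt (fun s : ℝ => Real.exp (-(1/2 * s))) (-(1/2) * Real.exp (-(1/2 * t))) t := by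
      have : HasDerivAt (fun s : ℝ => -(1/2 * s)) (-(1/2)) t := by
        simpa using ((hasDerivAt_id t).const_mul (1/2 : ℝ)).fun_neg
      have h5 := this.exp
      convert h5 using 1
      ring
    have h3 := (h1.fun_mul h2).const_mul ((1/2 : ℝ) ^ a / Real.Gamma (a+1))
    have h4 : HasDerivAt (fun i => -((1 / 2 : ℝ) ^ a / Real.Gamma (a + 1) * (i ^ a * Real.exp (-(1 / 2 * i))))) _ t := h3.fun_neg
    convert h4 using 1
    · rw [hF]; funext s; ring_nf
    have hhalf : (1/2 : ℝ) ^ (a+1) = (1/2 : ℝ) ^ a * (1/2 : ℝ) := by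
      rw [Real.rpow_add (by norm_num), Real.rpow_one]
    have hta : t ^ a = t ^ (a-1) * t := by
      rw [← Real.rpow_add_one ht0.ne']; ring_nf
    rw [p_def, p_def, hhalf, hGrec, show a + 1 - 1 = a from by ring, hta]
    field_simp
    ring
  have hint1 : IntervalIntegrable (p (a+1)) volume 0 x := p_intervalIntegrable (by linarith) hx
  have hint2 : IntervalIntegrable (p a) volume 0 x := p_intervalIntegrable ha hx
  have hFTC := intervalIntegral.integral_eq_sub_of_hasDerivAt_of_le hx.le hcont hderiv
    (hint1.sub hint2)
  rw [gamma_cdf_eq (by linarith : (0:ℝ) < a+1) hx, gamma_cdf_eq ha hx,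
    ← intervalIntegral.integral_sub hint1 hint2, hFTC]
  have hF0 : F 0 = 0 := by
    simp [hF, Real.zero_rpow ha.ne']
  rw [hF0, sub_zero]
  have hxa : (x/2) ^ a = x ^ a * (1/2 : ℝ) ^ a := by
    rw [div_eq_mul_inv, Real.mul_rpow hx.le (by norm_num)]
    norm_num
  have hFx : F x = -((1/2 : ℝ) ^ a / Real.Gamma (a+1) * x ^ a * Real.exp (-(1/2 * x))) := rfl
  have harg : -(1/2 * x) = -x/2 := by ring
  rw [hFx, harg, hxa]
  ring

/-- Telescoping over `h` steps. -/
lemma telescope {a : ℝ} (ha : 0 < a) {x : ℝ} (hx : 0 < x) (h : ℕ) :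
    ((gammaMeasure (a + h) (1/2) : Measure ℝ) (Iic x)).toReal
      - ((gammaMeasure a (1/2) : Measure ℝ) (Iic x)).toReal
      = -∑ j ∈ Finset.range h,
          (x/2) ^ (a + j) * Real.exp (-x/2) / Real.Gamma (a + j + 1) := by
  induction h with
  | zero => simp
  | succ n ih =>
    have hstep := step (a := a + n) (by positivity) hx
    push_cast
    have e1 : a + (n + 1 : ℝ) = (a + n) + 1 := by ring
    rw [Finset.sum_range_succ, neg_add, e1]
    push_cast at hstep
    linarith [hstep, ih]

end ChiSqAux

/-- Exact formula for the difference of chi-squared CDFs with degrees of freedom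
differing by an even integer `2h`. -/
theorem chiSq_cdf_diff_exact
    (f h : ℕ) (hf : 0 < f) (hh : 0 < h) (x : ℝ) (hx : 0 < x) :
    ((chiSq (f + 2 * h)) (Set.Iic x)).toReal - ((chiSq f) (Set.Iic x)).toReal =
      -∑ k ∈ Finset.Icc 1 h,
        (x / 2) ^ ((f : ℝ) / 2 + (h : ℝ) - (k : ℝ)) * Real.exp (-x / 2) /
          Real.Gamma ((f : ℝ) / 2 + (h : ℝ) - (k : ℝ) + 1) := by
  have ha : (0:ℝ) < (f:ℝ)/2 := by positivity
  have key := ChiSqAux.telescope ha hx h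
  have hshape : ((f + 2*h : ℕ) : ℝ) / 2 = (f:ℝ)/2 + (h:ℕ) := by push_cast; ring
  rw [chiSq, chiSq, hshape, key]
  congr 1
  rw [← Finset.sum_range_reflect, ← Finset.Ico_add_one_right_eq_Icc, Finset.sum_Ico_eq_sum_range]
  simp only [Nat.add_sub_cancel]
  apply Finset.sum_congr rfl
  intro j hj
  rw [Finset.mem_range] at hj
  have h1 : ((h - 1 - j : ℕ) : ℝ) = (h:ℝ) - 1 - j := by
    rw [Nat.cast_sub (by omega), Nat.cast_sub (by omega)]
    push_cast
    ring
  rw [h1]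
  have e2 : (f:ℝ)/2 + ((h:ℝ) - 1 - j) = (f:ℝ)/2 + h - ((1 + j : ℕ) : ℝ) := by
    push_cast; ring
  rw [e2]

end
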